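/- Decomposition formula for the opposite gerbe-twisted multilinear product M^op: for all 0 ≤ p < q ≤ k and all elements y_r, z_r ∈ A_r (r = 0, …, k), one has M^op_{(k,k−1,…,0)}( y_k z_k ⊗ y_{k−1} z_{k−1} ⊗ ⋯ ⊗ y_0 z_0 ) = M^op_{(k,…,q+1,q,p,p−1,…,0)}( y_k z_k ⊗ ⋯ ⊗ y_{q+1} z_{q+1} ⊗ z_q ⊗ y_p·W' ⊗ y_{p−1} z_{p−1} ⊗ ⋯ ⊗ y_0 z_0 ), where the outer product is taken along the index sequence (k, …, q+1, q, p, p−1, …, 0), the slot of index q receives z_q, the slot of index p receives y_p·W', and W' := M^op_{(q,q−1,…,p)}( y_q ⊗ y_{q−1} z_{q−1} ⊗ ⋯ ⊗ y_{p+1} z_{p+1} ⊗ z_p ) ∈ A_p. -/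

import Mathlib

section

variable {R : Type} [CommRing R] {A : ℕ → Type} [∀ i, Ring (A i)] [∀ i, Algebra R (A i)]

/-- The opposite gerbe-twisted product `M^op_{(i_0,…,i_m)}(u_0 ⊗ ⋯ ⊗ u_m)` along a (decreasing)
list of slots `[(i_0,u_0), …, (i_{m−1},u_{m−1})]` with base value `last = u_m ∈ A b`:
`u_m · G_{b,i_{m−1}}(u_{m−1}) · c_{b,i_{m−1},i_{m−2}} · G_{b,i_{m−2}}(u_{m−2}) ⋯ c_{b,i_1,i_0} · G_{b,i_0}(u_0)`. -/
def Mop (G : ∀ i j : ℕ, A j →ₐ[R] A i) (c : ∀ i j l : ℕ, (A i)ˣ) (b : ℕ) (last : A b) :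
    List ((i : ℕ) × A i) → A b
  | [] => last
  | [⟨i, u⟩] => last * G b i u
  | ⟨i, u⟩ :: ⟨j, v⟩ :: rest =>
      Mop G c b last (⟨j, v⟩ :: rest) * ((c b j i : (A b)ˣ) : A b) * G b i u

/-- The decreasing list of indices `[a, a−1, …, b]` (empty when `b > a`). -/
def descIdx (a b : ℕ) : List ℕ := ((List.range (a + 1 - b)).map (fun t => b + t)).reverse

lemma descIdx_eq (a b : ℕ) : descIdx a b = (List.range' b (a + 1 - b)).reverse := by
  unfold descIdx
  rw [List.range'_eq_map_range]

lemma descIdx_cons (a b : ℕ) (h1 : 1 ≤ a) (h : b ≤ a) :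
    descIdx a b = a :: descIdx (a - 1) b := by
  obtain ⟨a, rfl⟩ : ∃ t, a = t + 1 := ⟨a - 1, by omega⟩
  rw [descIdx_eq, descIdx_eq, show a + 1 + 1 - b = (a + 1 - b) + 1 by omega,
    List.range'_1_concat, List.reverse_append, show b + (a + 1 - b) = a + 1 by omega]
  simp

lemma descIdx_append (a m b : ℕ) (h1 : b ≤ m + 1) (h2 : m ≤ a) :
    descIdx a b = descIdx a (m + 1) ++ descIdx m b := by
  rw [descIdx_eq, descIdx_eq, descIdx_eq, ← List.reverse_append]
  congr 1
  have h := List.range'_append_1 (s := b) (m := m + 1 - b) (n := a - m)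
  rw [show b + (m + 1 - b) = m + 1 by omega] at h
  rw [show a + 1 - (m + 1) = a - m by omega, show a + 1 - b = (m + 1 - b) + (a - m) by omega]
  exact h.symm

lemma mem_descIdx {a b x : ℕ} (hx : x ∈ descIdx a b) : b ≤ x ∧ x ≤ a := by
  rw [descIdx_eq, List.mem_reverse, List.mem_range'_1] at hx
  omega

lemma descIdx_chain (a b : ℕ) : List.Chain' (fun x y : ℕ => y ≤ x) (descIdx a b) := by
  rw [descIdx_eq]
  refine List.Pairwise.isChain ?_
  rw [List.pairwise_reverse]
  exact (List.pairwise_lt_range' (s := b) (n := a + 1 - b) 1 (by simp)).imp fun h => le_of_lt h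

variable (G : ∀ i j : ℕ, A j →ₐ[R] A i) (c : ∀ i j l : ℕ, (A i)ˣ)

@[simp] lemma Mop_nil (b : ℕ) (X : A b) : Mop G c b X [] = X := rfl

@[simp] lemma Mop_single (b i : ℕ) (X : A b) (u : A i) :
    Mop G c b X [⟨i, u⟩] = X * G b i u := rfl

@[simp] lemma Mop_cons₂ (b i j : ℕ) (X : A b) (u : A i) (v : A j) (L : List ((i : ℕ) × A i)) :
    Mop G c b X (⟨i, u⟩ :: ⟨j, v⟩ :: L)
      = Mop G c b X (⟨j, v⟩ :: L) * ((c b j i : (A b)ˣ) : A b) * G b i u := rfl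

lemma Mop_base (b : ℕ) (X : A b) : ∀ L, Mop G c b X L = X * Mop G c b 1 L
  | [] => by simp
  | [⟨i, u⟩] => by simp [mul_assoc]
  | ⟨i, u⟩ :: ⟨j, v⟩ :: L => by
      rw [Mop_cons₂, Mop_cons₂, Mop_base b X (⟨j, v⟩ :: L)]
      simp [mul_assoc]

lemma Mop_head_mul (b q : ℕ) (X : A b) (u v : A q) :
    ∀ L, Mop G c b X (⟨q, u * v⟩ :: L) = Mop G c b X (⟨q, u⟩ :: L) * G b q v
  | [] => by simp [mul_assoc]
  | ⟨j, w⟩ :: L => by simp [mul_assoc]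

lemma Mop_append (b : ℕ) (X : A b) (j : ℕ) (v : A j) :
    ∀ (L1 L2 : List ((i : ℕ) × A i)),
      Mop G c b X (L1 ++ ⟨j, v⟩ :: L2)
        = Mop G c b (Mop G c b X (⟨j, v⟩ :: L2)) (L1 ++ [⟨j, (1 : A j)⟩])
  | [], L2 => by simp
  | [⟨i, u⟩], L2 => by simp
  | ⟨i, u⟩ :: ⟨i2, u2⟩ :: L1, L2 => by
      have ih := Mop_append b X j v (⟨i2, u2⟩ :: L1) L2
      simp only [List.cons_append, Mop_cons₂] at ih ⊢
      rw [ih]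

lemma Mop_pushG
    (hconj : ∀ i j l : ℕ, i ≤ j → j ≤ l → ∀ x : A l,
      G i j (G j l x) = (c i j l : A i) * G i l x * (((c i j l)⁻¹ : (A i)ˣ) : A i))
    (hcc : ∀ i j l m : ℕ, i ≤ j → j ≤ l → l ≤ m →
      (c i j l : A i) * (c i l m : A i) = G i j (c j l m : A j) * (c i j m : A i))
    (b p : ℕ) (hbp : b ≤ p) (w : A p) :
    ∀ (i : ℕ) (u : A i) (L : List ((i : ℕ) × A i)),
      p ≤ i →
      List.Chain' (fun s t => t.1 ≤ s.1) (⟨i, u⟩ :: L) →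
      (∀ s ∈ L, p ≤ s.1) →
      G b p (Mop G c p w (⟨i, u⟩ :: L)) * ((c b p i : (A b)ˣ) : A b)
        = Mop G c b (G b p w) ((⟨i, u⟩ :: L) ++ [⟨p, (1 : A p)⟩])
  | i, u, [], hpi, _, _ => by
      simp only [Mop_single, List.cons_append, List.nil_append, Mop_cons₂, map_mul, map_one,
        mul_one, hconj b p i hbp hpi u]
      simp [mul_assoc]
  | i, u, ⟨j, v⟩ :: L, hpi, hchain, hmem => by
      have hpj : p ≤ j := hmem ⟨j, v⟩ List.mem_cons_self
      have hji : j ≤ i := (List.isChain_cons_cons.1 hchain).1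
      have ih := Mop_pushG hconj hcc b p hbp w j v L hpj
        (List.isChain_cons_cons.1 hchain).2 (fun s hs => hmem s (List.mem_cons_of_mem _ hs))
      simp only [Mop_cons₂, map_mul, hconj b p i hbp hpi u] at *
      calc G b p (Mop G c p w (⟨j, v⟩ :: L)) * G b p ((c p j i : (A p)ˣ) : A p) *
            (((c b p i : (A b)ˣ) : A b) * G b i u * (((c b p i)⁻¹ : (A b)ˣ) : A b)) *
            ((c b p i : (A b)ˣ) : A b)
          = G b p (Mop G c p w (⟨j, v⟩ :: L)) *
              (G b p ((c p j i : (A p)ˣ) : A p) * ((c b p i : (A b)ˣ) : A b)) * G b i u := by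
            simp [mul_assoc]
        _ = G b p (Mop G c p w (⟨j, v⟩ :: L)) *
              (((c b p j : (A b)ˣ) : A b) * ((c b j i : (A b)ˣ) : A b)) * G b i u := by
            rw [← hcc b p j i hbp hpj hji]
        _ = (G b p (Mop G c p w (⟨j, v⟩ :: L)) * ((c b p j : (A b)ˣ) : A b)) *
              ((c b j i : (A b)ˣ) : A b) * G b i u := by
            simp [mul_assoc]
        _ = Mop G c b (G b p w) ((⟨j, v⟩ :: L) ++ [⟨p, (1 : A p)⟩]) *
              ((c b j i : (A b)ˣ) : A b) * G b i u := by rw [ih]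

lemma Mop_mid
    (hconj : ∀ i j l : ℕ, i ≤ j → j ≤ l → ∀ x : A l,
      G i j (G j l x) = (c i j l : A i) * G i l x * (((c i j l)⁻¹ : (A i)ˣ) : A i))
    (hcc : ∀ i j l m : ℕ, i ≤ j → j ≤ l → l ≤ m →
      (c i j l : A i) * (c i l m : A i) = G i j (c j l m : A j) * (c i j m : A i))
    (b p q : ℕ) (hbp : b ≤ p) (hpq : p < q) (X : A b)
    (yq zq : A q) (yp zp : A p) (mid T : List ((i : ℕ) × A i))
    (hchain : List.Chain' (fun s t => t.1 ≤ s.1) ((⟨q, yq⟩ : (i : ℕ) × A i) :: mid))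
    (hmem : ∀ s ∈ mid, p ≤ s.1) :
    Mop G c b X (⟨q, yq * zq⟩ :: (mid ++ ⟨p, yp * zp⟩ :: T))
      = Mop G c b X (⟨q, zq⟩ :: ⟨p, yp * Mop G c p zp (⟨q, yq⟩ :: mid)⟩ :: T) := by
  have key := Mop_pushG G c hconj hcc b p hbp zp q yq mid (le_of_lt hpq) hchain hmem
  -- rewrite RHS
  have hrhs : Mop G c b X (⟨q, zq⟩ :: ⟨p, yp * Mop G c p zp (⟨q, yq⟩ :: mid)⟩ :: T)
      = Mop G c b X (⟨p, yp⟩ :: T) *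
          (G b p (Mop G c p zp (⟨q, yq⟩ :: mid)) * ((c b p q : (A b)ˣ) : A b)) * G b q zq := by
    rw [Mop_cons₂, Mop_head_mul G c b p X yp _ T]
    simp [mul_assoc, map_mul]
  rw [hrhs, key,
    Mop_base G c b (G b p zp)]
  -- rewrite LHS
  rw [show (⟨q, yq * zq⟩ : (i : ℕ) × A i) :: (mid ++ ⟨p, yp * zp⟩ :: T)
        = ((⟨q, yq * zq⟩ : (i : ℕ) × A i) :: mid) ++ ⟨p, yp * zp⟩ :: T from rfl,
    Mop_append, Mop_base G c b (Mop G c b X (⟨p, yp * zp⟩ :: T)),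
    Mop_head_mul G c b p X yp zp T, List.cons_append, Mop_head_mul]
  simp [List.cons_append, mul_assoc]

/-- Decomposition formula for the opposite gerbe-twisted multilinear product
`M^op`: for `0 ≤ p < q ≤ k` and `y_r, z_r ∈ A_r`,
`M^op_{(k,…,0)}(y_k z_k ⊗ ⋯ ⊗ y_0 z_0)
  = M^op_{(k,…,q+1,q,p,…,0)}(y_k z_k ⊗ ⋯ ⊗ y_{q+1}z_{q+1} ⊗ z_q ⊗ y_p·W' ⊗ y_{p−1}z_{p−1} ⊗ ⋯ ⊗ y_0 z_0)`
where `W' = M^op_{(q,…,p)}(y_q ⊗ y_{q−1}z_{q−1} ⊗ ⋯ ⊗ y_{p+1}z_{p+1} ⊗ z_p)`. -/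
theorem Mop_decomposition
    (G : ∀ i j : ℕ, A j →ₐ[R] A i) (c : ∀ i j l : ℕ, (A i)ˣ)
    (hGid : ∀ (i : ℕ) (x : A i), G i i x = x)
    (hconj : ∀ i j l : ℕ, i ≤ j → j ≤ l → ∀ x : A l,
      G i j (G j l x) = (c i j l : A i) * G i l x * (((c i j l)⁻¹ : (A i)ˣ) : A i))
    (hciil : ∀ i l : ℕ, i ≤ l → c i i l = 1)
    (hcill : ∀ i l : ℕ, i ≤ l → c i l l = 1)
    (hcc : ∀ i j l m : ℕ, i ≤ j → j ≤ l → l ≤ m →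
      (c i j l : A i) * (c i l m : A i) = G i j (c j l m : A j) * (c i j m : A i))
    (k p q : ℕ) (hpq : p < q) (hqk : q ≤ k)
    (y z : ∀ r : ℕ, A r) :
    Mop G c 0 (y 0 * z 0)
        ((descIdx k 1).map (fun r => (⟨r, y r * z r⟩ : (i : ℕ) × A i)))
      = (if hp : p = 0 then
          Mop G c 0
            (y 0 *
              (cast (congrArg A hp)
                (Mop G c p (z p)
                  (⟨q, y q⟩ ::
                    (descIdx (q - 1) (p + 1)).map (fun r => (⟨r, y r * z r⟩ : (i : ℕ) × A i))))))
            (((descIdx k (q + 1)).map (fun r => (⟨r, y r * z r⟩ : (i : ℕ) × A i)))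
              ++ [⟨q, z q⟩])
        else
          Mop G c 0 (y 0 * z 0)
            (((descIdx k (q + 1)).map (fun r => (⟨r, y r * z r⟩ : (i : ℕ) × A i)))
              ++ [⟨q, z q⟩,
                  ⟨p, y p *
                      (Mop G c p (z p)
                        (⟨q, y q⟩ ::
                          (descIdx (q - 1) (p + 1)).map
                            (fun r => (⟨r, y r * z r⟩ : (i : ℕ) × A i))))⟩]
              ++ (descIdx (p - 1) 1).map (fun r => (⟨r, y r * z r⟩ : (i : ℕ) × A i)))) := by
  set f : ℕ → (i : ℕ) × A i := fun r => ⟨r, y r * z r⟩ with hf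
  have hq1 : 1 ≤ q := by omega
  by_cases hp : p = 0
  · rw [dif_pos hp]
    subst hp
    -- split the index list at q
    have hsplit : descIdx k 1 = descIdx k (q + 1) ++ q :: descIdx (q - 1) 1 := by
      rw [descIdx_append k q 1 (by omega) hqk, descIdx_cons q 1 hq1 hq1]
    rw [hsplit, List.map_append, List.map_cons]
    rw [Mop_append G c 0 (y 0 * z 0) q (y q * z q) ((descIdx k (q + 1)).map f)
      ((descIdx (q - 1) 1).map f)]
    have : ((descIdx k (q + 1)).map f) ++ [(⟨q, z q⟩ : (i : ℕ) × A i)]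
        = ((descIdx k (q + 1)).map f) ++ (⟨q, z q⟩ : (i : ℕ) × A i) :: [] := rfl
    rw [this, Mop_append G c 0 _ q (z q) ((descIdx k (q + 1)).map f) []]
    congr 1
    simp only [cast_eq, Mop_single]
    rw [Mop_head_mul G c 0 q (y 0 * z 0) (y q) (z q) ((descIdx (q - 1) 1).map f),
      Mop_base G c 0 (y 0 * z 0) ((⟨q, y q⟩ : (i : ℕ) × A i) :: (descIdx (q - 1) 1).map f),
      Mop_base G c 0 (z 0) ((⟨q, y q⟩ : (i : ℕ) × A i) :: (descIdx (q - 1) 1).map f)]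
    simp [mul_assoc]
  · rw [dif_neg hp]
    have hp1 : 1 ≤ p := by omega
    -- split the index list at q and at p
    have hsplit : descIdx k 1
        = descIdx k (q + 1) ++ q :: (descIdx (q - 1) (p + 1) ++ p :: descIdx (p - 1) 1) := by
      rw [descIdx_append k q 1 (by omega) hqk, descIdx_cons q 1 hq1 hq1,
        descIdx_append (q - 1) p 1 (by omega) (by omega), descIdx_cons p 1 hp1 hp1]
    rw [hsplit, List.map_append, List.map_cons, List.map_append, List.map_cons]
    rw [Mop_append G c 0 (y 0 * z 0) q (y q * z q) ((descIdx k (q + 1)).map f)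
      (((descIdx (q - 1) (p + 1)).map f) ++ (⟨p, y p * z p⟩ : (i : ℕ) × A i)
        :: (descIdx (p - 1) 1).map f)]
    have hassoc : (((descIdx k (q + 1)).map f) ++
          [(⟨q, z q⟩ : (i : ℕ) × A i),
            ⟨p, y p * (Mop G c p (z p) (⟨q, y q⟩ :: (descIdx (q - 1) (p + 1)).map f))⟩] ++
          (descIdx (p - 1) 1).map f)
        = ((descIdx k (q + 1)).map f) ++
            (⟨q, z q⟩ : (i : ℕ) × A i) ::
              (⟨p, y p * (Mop G c p (z p) (⟨q, y q⟩ :: (descIdx (q - 1) (p + 1)).map f))⟩ ::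
                (descIdx (p - 1) 1).map f) := by
      simp [List.append_assoc]
    rw [hassoc,
      Mop_append G c 0 (y 0 * z 0) q (z q) ((descIdx k (q + 1)).map f) _]
    congr 1
    have hchain : List.Chain' (fun s t : (i : ℕ) × A i => t.1 ≤ s.1)
        ((⟨q, y q⟩ : (i : ℕ) × A i) :: (descIdx (q - 1) (p + 1)).map f) := by
      simp only [List.Chain', List.isChain_cons]
      constructor
      · intro s hs
        have hmem := List.mem_of_mem_head? hs
        obtain ⟨r, hr, rfl⟩ := List.mem_map.1 hmem
        have := mem_descIdx hr
        simp only [hf]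
        omega
      · rw [List.isChain_map]
        exact descIdx_chain (q - 1) (p + 1)
    have hmem : ∀ s ∈ (descIdx (q - 1) (p + 1)).map f, p ≤ s.1 := by
      intro s hs
      obtain ⟨r, hr, rfl⟩ := List.mem_map.1 hs
      have := mem_descIdx hr
      simp only [hf]
      omega
    exact Mop_mid G c hconj hcc 0 p q (by omega) hpq (y 0 * z 0) (y q) (z q) (y p) (z p)
      ((descIdx (q - 1) (p + 1)).map f) ((descIdx (p - 1) 1).map f) hchain hmem

end
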